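/- Let n > m ≥ 2 be integers and k = n + 1 - m. Let λ, μ be k-strict partitions with m parts, each part at most n+k, satisfying |λ| + |μ| < 2n + 1. Define f(λ,j) = j - 1 - #{i < j : λ_i + λ_j ≤ 2k + 1 + j - i}. Then for all j ∈ [1,m], f(λ, m+1-j) + f(μ, j) ≤ n + k - λ_{m+1-j} - μ_j. -/

import Mathlib

/-- `f(λ,j) = j - 1 - #{i : 1 ≤ i < j, λ_i + λ_j ≤ 2k + 1 + j - i}`, the number of
indices `i < j` with `λ_i + λ_j > 2k + 1 + j - i` (even orthogonal case). -/
def fCountD (k : ℕ) (lam : ℕ → ℕ) (j : ℕ) : ℕ :=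
  j - 1 - ((Finset.Ico 1 j).filter fun i => lam i + lam j ≤ 2 * k + 1 + j - i).card

lemma sum_lb1 (pt : ℕ → ℕ) (a : ℕ) : ∀ c : ℕ, (∀ i, 1 ≤ i → i ≤ c → a + (c + 1 - i) ≤ pt i) →
    2 * (c * a) + c * (c + 1) ≤ 2 * ∑ i ∈ Finset.Icc 1 c, pt i := by
  intro c
  induction c generalizing a with
  | zero => simp
  | succ c ih =>
    intro h
    rw [Finset.sum_Icc_succ_top (by omega : 1 ≤ c + 1)]
    have h1 : 2 * (c * (a + 1)) + c * (c + 1) ≤ 2 * ∑ i ∈ Finset.Icc 1 c, pt i := by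
      apply ih
      intro i hi1 hic
      have := h i hi1 (by omega)
      omega
    have h2 : a + 1 ≤ pt (c + 1) := by
      have := h (c + 1) (by omega) le_rfl
      omega
    nlinarith

lemma sum_lb2 (pt : ℕ → ℕ) : ∀ c : ℕ, 1 ≤ c → (∀ i, 1 ≤ i → i ≤ c → 1 ≤ pt i) →
    pt 1 + (c - 1) ≤ ∑ i ∈ Finset.Icc 1 c, pt i := by
  intro c
  induction c with
  | zero => omega
  | succ c ih =>
    intro _ h
    rcases Nat.eq_zero_or_pos c with h0 | h1
    · subst h0; simp
    · rw [Finset.sum_Icc_succ_top (by omega : 1 ≤ c + 1)]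
      have i1 := ih h1 (fun i hi1 hic => h i hi1 (by omega))
      have i2 := h (c + 1) (by omega) le_rfl
      omega

lemma side (n m k : ℕ) (hm : 2 ≤ m) (hmn : m < n) (hk : k = n + 1 - m)
    (pt : ℕ → ℕ) (htop : pt 1 ≤ n + k)
    (hdec : ∀ i j, 1 ≤ i → i ≤ j → j ≤ m → pt j ≤ pt i)
    (hstrict : ∀ j, 1 ≤ j → j < m → k < pt j → pt (j + 1) < pt j)
    (jq : ℕ) (hj1 : 1 ≤ jq) (hjm : jq ≤ m) :
    fCountD k pt jq + 1 ≤ jq ∧ pt jq ≤ n + k ∧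
    2 * (jq * pt jq) + fCountD k pt jq * (fCountD k pt jq + 1) ≤
      2 * ∑ i ∈ Finset.Icc 1 m, pt i ∧
    (1 ≤ fCountD k pt jq + pt jq →
      fCountD k pt jq + pt jq + jq ≤ (∑ i ∈ Finset.Icc 1 m, pt i) + 1) := by
  set c := fCountD k pt jq with hc
  set S := (Finset.Ico 1 jq).filter (fun i => ¬ (pt i + pt jq ≤ 2 * k + 1 + jq - i)) with hS
  -- c = S.card
  have hcard : c = S.card := by
    rw [hc, hS]
    have h2 := Finset.card_filter_add_card_filter_not
      (s := Finset.Ico 1 jq) (p := fun i => pt i + pt jq ≤ 2 * k + 1 + jq - i)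
    have h3 : (Finset.Ico 1 jq).card = jq - 1 := by simp
    unfold fCountD
    omega
  have hcjq : c + 1 ≤ jq := by
    have h4 : S.card ≤ (Finset.Ico 1 jq).card := Finset.card_filter_le _ _
    have h3 : (Finset.Ico 1 jq).card = jq - 1 := by simp
    omega
  -- strict run lemma
  have hrun : ∀ d s, 1 ≤ s → s + d ≤ m → k < pt (s + d) → pt (s + d) + d ≤ pt s := by
    intro d
    induction d with
    | zero => intro s _ _ _; simp
    | succ d ih =>
      intro s hs hsm hk'
      have h1 : pt (s + 1 + d) + d ≤ pt (s + 1) := by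
        apply ih (s + 1) (by omega) (by omega)
        have e : s + 1 + d = s + (d + 1) := by omega
        rw [e]; exact hk'
      have h2 : pt (s + 1) < pt s := by
        apply hstrict s hs (by omega)
        have h3 : pt (s + (d + 1)) ≤ pt s := hdec s (s + (d + 1)) hs (by omega) hsm
        omega
      have e : s + (d + 1) = s + 1 + d := by omega
      rw [e]; omega
  -- downward closure of S
  have hmemS : ∀ s ∈ S, ∀ i, 1 ≤ i → i ≤ s → i ∈ S := by
    intro s hs i hi1 his
    simp only [hS, Finset.mem_filter, Finset.mem_Ico] at hs ⊢
    obtain ⟨⟨hs1, hs2⟩, hs3⟩ := hs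
    have hcond : 2 * k + 2 + (jq - s) ≤ pt s + pt jq := by omega
    have hks : k + 2 ≤ pt s := by
      have := hdec s jq hs1 (le_of_lt hs2) hjm
      omega
    have hrun' : pt s + (s - i) ≤ pt i := by
      have e : i + (s - i) = s := by omega
      have := hrun (s - i) i hi1 (by omega) (by rw [e]; omega)
      rw [e] at this; exact this
    refine ⟨⟨hi1, by omega⟩, by omega⟩
  -- [1,c] ⊆ S
  have hQmem : ∀ i, 1 ≤ i → i ≤ c → i ∈ S := by
    intro i hi1 hic
    by_contra hniS
    have hsub : S ⊆ Finset.Ico 1 i := by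
      intro s hs
      have hs1 : 1 ≤ s := by
        have := Finset.mem_of_mem_filter s hs
        simp only [Finset.mem_Ico] at this
        omega
      simp only [Finset.mem_Ico]
      refine ⟨hs1, ?_⟩
      by_contra hge
      push_neg at hge
      exact hniS (hmemS s hs i hi1 hge)
    have h5 := Finset.card_le_card hsub
    have h6 : (Finset.Ico 1 i).card = i - 1 := by simp
    omega
  have hQ : ∀ i, 1 ≤ i → i ≤ c → 2 * k + 2 + (jq - i) ≤ pt i + pt jq := by
    intro i hi1 hic
    have := hQmem i hi1 hic
    simp only [hS, Finset.mem_filter, Finset.mem_Ico] at this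
    obtain ⟨⟨_, h2⟩, h3⟩ := this
    omega
  -- lower bound for entries
  have hLow : ∀ i, 1 ≤ i → i ≤ c → pt jq + (jq - i) ≤ pt i := by
    intro i hi1 hic
    have hq := hQ i hi1 hic
    by_cases ha : pt jq ≤ k
    · omega
    · have e : i + (jq - i) = jq := by omega
      have := hrun (jq - i) i hi1 (by rw [e]; omega) (by rw [e]; omega)
      rw [e] at this; exact this
  -- (ii)
  have hcap : pt jq ≤ n + k := le_trans (hdec 1 jq le_rfl hj1 hjm) htop
  -- sum bounds
  have hAub : ∑ i ∈ Finset.Icc 1 jq, pt i ≤ ∑ i ∈ Finset.Icc 1 m, pt i :=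
    Finset.sum_le_sum_of_subset (Finset.Icc_subset_Icc_right hjm)
  have hsplit : (∑ i ∈ Finset.Icc 1 c, pt i) + ∑ i ∈ Finset.Ico (c + 1) (jq + 1), pt i
      = ∑ i ∈ Finset.Icc 1 jq, pt i := by
    rw [show Finset.Icc 1 c = Finset.Ico 1 (c + 1) from (Finset.Ico_add_one_right_eq_Icc 1 c).symm,
      show Finset.Icc 1 jq = Finset.Ico 1 (jq + 1) from (Finset.Ico_add_one_right_eq_Icc 1 jq).symm]
    exact Finset.sum_Ico_consecutive _ (by omega) (by omega)
  have htail : (jq - c) * pt jq ≤ ∑ i ∈ Finset.Ico (c + 1) (jq + 1), pt i := by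
    have h := Finset.card_nsmul_le_sum (Finset.Ico (c + 1) (jq + 1)) pt (pt jq) ?_
    · have hcd : (Finset.Ico (c + 1) (jq + 1)).card = jq - c := by
        simp [Nat.card_Ico]
      rw [hcd] at h
      simpa using h
    · intro i hi
      simp only [Finset.mem_Ico] at hi
      exact hdec i jq (by omega) (by omega) hjm
  have hhead : 2 * (c * pt jq) + c * (c + 1) ≤ 2 * ∑ i ∈ Finset.Icc 1 c, pt i := by
    apply sum_lb1
    intro i hi1 hic
    have := hLow i hi1 hic
    omega
  have hiii : 2 * (jq * pt jq) + c * (c + 1) ≤ 2 * ∑ i ∈ Finset.Icc 1 m, pt i := by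
    have e1 : c * pt jq + (jq - c) * pt jq = jq * pt jq := by
      rw [← Nat.add_mul]
      congr 1
      omega
    nlinarith [hsplit, htail, hhead, hAub]
  refine ⟨hcjq, hcap, hiii, ?_⟩
  -- (iv)
  intro hact
  rcases Nat.eq_zero_or_pos (pt jq) with ha0 | ha1
  · -- a = 0, so c ≥ 1
    have hc1 : 1 ≤ c := by omega
    have hAc : ∑ i ∈ Finset.Icc 1 c, pt i ≤ ∑ i ∈ Finset.Icc 1 m, pt i :=
      Finset.sum_le_sum_of_subset (Finset.Icc_subset_Icc_right (by omega))
    have h1 : pt 1 + (c - 1) ≤ ∑ i ∈ Finset.Icc 1 c, pt i := by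
      apply sum_lb2 pt c hc1
      intro i hi1 hic
      have := hLow i hi1 hic
      omega
    have h2 := hQ 1 le_rfl hc1
    omega
  · -- a ≥ 1
    have h1 : jq + pt jq ≤ jq * pt jq + 1 := by
      obtain ⟨q, hq⟩ : ∃ q, jq = q + 1 := ⟨jq - 1, by omega⟩
      obtain ⟨a', hha⟩ : ∃ a', pt jq = a' + 1 := ⟨pt jq - 1, by omega⟩
      rw [hha, hq]
      have e : (q + 1) * (a' + 1) = q * a' + q + a' + 1 := by ring
      rw [e]
      have := Nat.zero_le (q * a')
      omega
    have hcc : 2 * c ≤ c * (c + 1) := by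
      rcases Nat.eq_zero_or_pos c with h0 | h1
      · simp [h0]
      · obtain ⟨c', hc'⟩ : ∃ c', c = c' + 1 := ⟨c - 1, by omega⟩
        rw [hc']
        have e : (c' + 1) * (c' + 1 + 1) = c' * c' + 3 * c' + 2 := by ring
        rw [e]
        have := Nat.zero_le (c' * c')
        omega
    linarith [hiii, h1, hcc]

lemma final_side (n m k j f b B : ℕ) (hm : 2 ≤ m) (hmn : m < n) (hk : k = n + 1 - m)
    (hfj : f + 1 ≤ j) (hjm : j ≤ m) (hf : 1 ≤ f)
    (hsum2 : 2 * (j * b) + f * (f + 1) ≤ 2 * B) (hB : B ≤ 2 * n) :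
    f + b ≤ n + k := by
  by_contra hcon
  push_neg at hcon
  have key2 : 2 * ((f + 1) * b) + f * (f + 1) ≤ 4 * n := by
    have h6 : (f + 1) * b ≤ j * b := Nat.mul_le_mul_right b hfj
    linarith
  obtain ⟨u, hu⟩ : ∃ u, f = u + 1 := ⟨f - 1, by omega⟩
  obtain ⟨v, hv⟩ : ∃ v, m = f + 1 + v := ⟨m - f - 1, by omega⟩
  obtain ⟨w, hw⟩ : ∃ w, n = m + 1 + w := ⟨n - m - 1, by omega⟩
  have hbv : ∃ e, b = v + 2 * w + e + 5 := ⟨b - (v + 2 * w + 5), by omega⟩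
  obtain ⟨e, he⟩ := hbv
  subst he hw hv hu hk
  ring_nf at key2
  nlinarith [key2, Nat.zero_le (u * v), Nat.zero_le (u * w), Nat.zero_le (u * e),
    Nat.zero_le (u * u), Nat.zero_le u, Nat.zero_le v, Nat.zero_le w, Nat.zero_le e]

/-- Let `n > m ≥ 2`, `k = n + 1 - m`, and let `λ, μ` be `k`-strict partitions with `m`
parts, each part at most `n + k`, with `|λ| + |μ| < 2n + 1`.  Then for all `1 ≤ j ≤ m`,
`f(λ, m+1-j) + f(μ, j) ≤ n + k - λ_{m+1-j} - μ_j`. -/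
theorem stmt_5 (n m k : ℕ) (hm : 2 ≤ m) (hmn : m < n) (hk : k = n + 1 - m)
    (lam mu : ℕ → ℕ)
    (hlamtop : lam 1 ≤ n + k) (hmutop : mu 1 ≤ n + k)
    (hlamdec : ∀ i j, 1 ≤ i → i ≤ j → j ≤ m → lam j ≤ lam i)
    (hmudec : ∀ i j, 1 ≤ i → i ≤ j → j ≤ m → mu j ≤ mu i)
    (hlamstrict : ∀ j, 1 ≤ j → j < m → k < lam j → lam (j + 1) < lam j)
    (hmustrict : ∀ j, 1 ≤ j → j < m → k < mu j → mu (j + 1) < mu j)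
    (hsum : (∑ i ∈ Finset.Icc 1 m, lam i) + (∑ i ∈ Finset.Icc 1 m, mu i) < 2 * n + 1) :
    ∀ j, 1 ≤ j → j ≤ m →
      fCountD k lam (m + 1 - j) + fCountD k mu j + lam (m + 1 - j) + mu j ≤ n + k := by
  intro j hj1 hjm
  set jp := m + 1 - j with hjp
  have hjp1 : 1 ≤ jp := by omega
  have hjpm : jp ≤ m := by omega
  obtain ⟨hL1, hL2, hL3, hL4⟩ :=
    side n m k hm hmn hk lam hlamtop hlamdec hlamstrict jp hjp1 hjpm
  obtain ⟨hM1, hM2, hM3, hM4⟩ :=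
    side n m k hm hmn hk mu hmutop hmudec hmustrict j hj1 hjm
  set f1 := fCountD k lam jp
  set f2 := fCountD k mu j
  set a := lam jp
  set b := mu j
  set A := ∑ i ∈ Finset.Icc 1 m, lam i
  set B := ∑ i ∈ Finset.Icc 1 m, mu i
  have hAB : A + B ≤ 2 * n := by omega
  by_cases h1 : f1 + a = 0 <;> by_cases h2 : f2 + b = 0
  · omega
  · -- lam side inactive, mu side active
    rcases Nat.eq_zero_or_pos f2 with hf2 | hf2
    · omega
    · have := final_side n m k j f2 b B hm hmn hk hM1 hjm hf2 hM3 (by omega)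
      omega
  · -- mu side inactive, lam side active
    rcases Nat.eq_zero_or_pos f1 with hf1 | hf1
    · omega
    · have := final_side n m k jp f1 a A hm hmn hk hL1 hjpm hf1 hL3 (by omega)
      omega
  · -- both active
    have h3 := hL4 (by omega)
    have h4 := hM4 (by omega)
    omega
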